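/- Let Y ⊆ ℝⁿ be a linear subspace. Then the set of linear maps T : ℝⁿ → ℝᵐ such that the restriction T|_Y does not have maximal rank (i.e., rank(T|_Y) < min(m, dim Y)) is porous in the space L(ℝⁿ, ℝᵐ) of linear maps equipped with the operator norm. -/

import Mathlib

open Metric Filter Set

/-- γ(x,R,X): sup of radii r ≥ 0 of open balls contained in B_R(x) \ X (sup ∅ = 0). -/
noncomputable def porGamma {E : Type*} [SeminormedAddCommGroup E] (x : E) (R : ℝ) (X : Set E) : ℝ :=
  sSup {r : ℝ | 0 ≤ r ∧ ∃ x' : E, ball x' r ⊆ ball x R \ X}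

/-- Porosity of X at x: liminf_{R→0⁺} γ(x,R,X)/R. -/
noncomputable def porosityAt {E : Type*} [SeminormedAddCommGroup E] (x : E) (X : Set E) : ℝ :=
  liminf (fun R => porGamma x R X / R) (nhdsWithin 0 (Ioi 0))

/-- X is porous if its porosity is positive at each of its points. -/
def IsPorous {E : Type*} [SeminormedAddCommGroup E] (X : Set E) : Prop :=
  ∀ x ∈ X, 0 < porosityAt x X

/-- X is σ-porous if it is a countable union of porous sets. -/
def IsSigmaPorous {E : Type*} [SeminormedAddCommGroup E] (X : Set E) : Prop :=
  ∃ f : ℕ → Set E, (∀ k, IsPorous (f k)) ∧ X = ⋃ k, f k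

/-- Asymptotic cone of X. -/
def asympCone {E : Type*} [SeminormedAddCommGroup E] [NormedSpace ℝ E] (X : Set E) : Set E :=
  {v | ∃ (x : ℕ → E) (t : ℕ → ℝ), (∀ k, x k ∈ X) ∧ (∀ k, 0 < t k) ∧
    Tendsto (fun k => ‖x k‖) atTop atTop ∧ Tendsto (fun k => t k • x k) atTop (nhds v)}

open Module

variable {E F : Type*} [NormedAddCommGroup E] [InnerProductSpace ℝ E]
  [NormedAddCommGroup F] [InnerProductSpace ℝ F] [FiniteDimensional ℝ E] [FiniteDimensional ℝ F]

local notation "⟪" x ", " y "⟫" => @inner ℝ _ _ x y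

lemma exists_perturb (hdim : finrank ℝ E ≤ finrank ℝ F) (A : E →L[ℝ] F) {ε : ℝ} (hε : 0 < ε) :
    ∃ B : E →L[ℝ] F, (∀ x, ‖B x‖ = ‖x‖) ∧ ∀ x, ε * ‖x‖ ≤ ‖(A + ε • B) x‖ := by
  classical
  set S := (ContinuousLinearMap.adjoint A) ∘L A with hS
  have hsym : (S : E →ₗ[ℝ] E).IsSymmetric := by
    intro x y
    simp only [hS, ContinuousLinearMap.coe_coe, ContinuousLinearMap.comp_apply,
      ContinuousLinearMap.adjoint_inner_left, ContinuousLinearMap.adjoint_inner_right]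
  have hdd : finrank ℝ E = finrank ℝ E := rfl
  set d := finrank ℝ E
  set b := hsym.eigenvectorBasis hdd with hb
  set μ := hsym.eigenvalues hdd with hμ
  have hbij : ∀ i j : Fin d, ⟪b i, b j⟫ = if i = j then 1 else 0 :=
    orthonormal_iff_ite.mp b.orthonormal
  have hinner : ∀ i j : Fin d, ⟪A (b i), A (b j)⟫ = if i = j then μ i else 0 := by
    intro i j
    have h1 : ⟪A (b i), A (b j)⟫ = ⟪S (b i), b j⟫ := by
      simp [hS, ContinuousLinearMap.adjoint_inner_left]
    have h2 : S (b i) = μ i • b i := hsym.apply_eigenvectorBasis hdd i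
    rw [h1, h2, real_inner_smul_left, hbij]
    by_cases h : i = j <;> simp [h]
  have hμnn : ∀ i, 0 ≤ μ i := by
    intro i
    have h := (hinner i i).symm
    rw [if_pos rfl] at h
    rw [h]
    exact real_inner_self_nonneg
  -- the partial family of normalized images
  set v : Fin (finrank ℝ F) → F := fun j =>
    if hj : (j : ℕ) < d then (Real.sqrt (μ ⟨j, hj⟩))⁻¹ • A (b ⟨j, hj⟩) else 0 with hv
  set s : Set (Fin (finrank ℝ F)) := {j | ∃ hj : (j : ℕ) < d, μ ⟨j, hj⟩ ≠ 0} with hs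
  have hvon : Orthonormal ℝ (s.restrict v) := by
    rw [orthonormal_iff_ite]
    rintro ⟨j, hj, hμj⟩ ⟨j', hj', hμj'⟩
    simp only [Set.restrict_apply, Subtype.mk_eq_mk]
    have hvj : v j = (Real.sqrt (μ ⟨j, hj⟩))⁻¹ • A (b ⟨j, hj⟩) := dif_pos hj
    have hvj' : v j' = (Real.sqrt (μ ⟨j', hj'⟩))⁻¹ • A (b ⟨j', hj'⟩) := dif_pos hj'
    change ⟪v j, v j'⟫ = _
    rw [hvj, hvj', real_inner_smul_left, real_inner_smul_right, hinner]
    by_cases hjj : j = j'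
    · subst hjj
      rw [if_pos rfl, if_pos rfl]
      have hpos : 0 < μ ⟨j, hj⟩ := (hμnn _).lt_of_ne (Ne.symm hμj)
      rw [← mul_assoc, ← mul_inv, Real.mul_self_sqrt hpos.le, inv_mul_cancel₀ hμj]
    · have hne : (⟨(j:ℕ), hj⟩ : Fin d) ≠ ⟨(j':ℕ), hj'⟩ := by
        intro hc
        simp only [Fin.mk.injEq] at hc
        exact hjj (Fin.val_injective hc)
      rw [if_neg hne, if_neg hjj, mul_zero, mul_zero]
  obtain ⟨cb, hcb⟩ := hvon.exists_orthonormalBasis_extension_of_card_eq (by simp)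
  set u : Fin d → F := fun i => cb (Fin.castLE hdim i) with hu
  have huon : Orthonormal ℝ u := cb.orthonormal.comp _ (Fin.castLE_injective hdim)
  have hkey : ∀ i : Fin d, A (b i) = Real.sqrt (μ i) • u i := by
    intro i
    by_cases hμi : μ i = 0
    · have : ⟪A (b i), A (b i)⟫ = 0 := by rw [hinner, if_pos rfl, hμi]
      rw [inner_self_eq_zero] at this
      rw [this, hμi, Real.sqrt_zero, zero_smul]
    · have hmem : Fin.castLE hdim i ∈ s := by
        refine ⟨by simpa using i.isLt, ?_⟩
        convert hμi using 2
        exact Fin.ext (by simp)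
      have := hcb _ hmem
      have hval : (⟨((Fin.castLE hdim i : Fin (finrank ℝ F)) : ℕ),
          by simpa using i.isLt⟩ : Fin d) = i := Fin.ext (by simp)
      rw [hu]
      simp only [this, hv]
      rw [dif_pos (show ((Fin.castLE hdim i : Fin (finrank ℝ F)) : ℕ) < d by simpa using i.isLt)]
      rw [show (⟨((Fin.castLE hdim i : Fin (finrank ℝ F)) : ℕ), _⟩ : Fin d) = i from hval]
      rw [smul_smul, mul_inv_cancel₀, one_smul]
      exact Real.sqrt_ne_zero'.mpr ((hμnn i).lt_of_ne (Ne.symm hμi))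
  -- define B
  set Blin : E →ₗ[ℝ] F := b.toBasis.constr ℝ u with hBlin
  set B : E →L[ℝ] F := LinearMap.toContinuousLinearMap Blin with hBdef
  have hBb : ∀ i, B (b i) = u i := by
    intro i
    show Blin (b i) = u i
    have := b.toBasis.constr_basis ℝ u i
    rwa [OrthonormalBasis.coe_toBasis] at this
  have hexp : ∀ x : E, x = ∑ i, b.repr x i • b i := fun x => (b.sum_repr x).symm
  have hnormsq : ∀ x : E, ‖x‖ ^ 2 = ∑ i, (b.repr x i) ^ 2 := by
    intro x
    rw [← real_inner_self_eq_norm_sq]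
    conv_lhs => rw [hexp x]
    rw [b.orthonormal.inner_sum]
    simp [sq]
  have hBx : ∀ x : E, B x = ∑ i, b.repr x i • u i := by
    intro x
    conv_lhs => rw [hexp x]
    rw [map_sum]
    simp [hBb]
  have hBnorm : ∀ x, ‖B x‖ = ‖x‖ := by
    intro x
    have : ‖B x‖ ^ 2 = ‖x‖ ^ 2 := by
      rw [← real_inner_self_eq_norm_sq, hBx x, huon.inner_sum, hnormsq]
      simp [sq]
    calc ‖B x‖ = Real.sqrt (‖B x‖ ^ 2) := (Real.sqrt_sq (norm_nonneg _)).symm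
    _ = Real.sqrt (‖x‖ ^ 2) := by rw [this]
    _ = ‖x‖ := Real.sqrt_sq (norm_nonneg _)
  refine ⟨B, hBnorm, ?_⟩
  intro x
  have hABx : (A + ε • B) x = ∑ i, (b.repr x i * (Real.sqrt (μ i) + ε)) • u i := by
    have h1 : A x = ∑ i, b.repr x i • A (b i) := by
      conv_lhs => rw [hexp x]
      rw [map_sum]
      simp only [map_smul]
    have h2 : (A + ε • B) x = A x + ε • B x := rfl
    rw [h2, h1, hBx, Finset.smul_sum, ← Finset.sum_add_distrib]
    refine Finset.sum_congr rfl fun i _ => ?_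
    rw [hkey i, smul_smul, smul_smul, ← add_smul]
    ring_nf
  have hsq : (ε * ‖x‖) ^ 2 ≤ ‖(A + ε • B) x‖ ^ 2 := by
    rw [← real_inner_self_eq_norm_sq, hABx, huon.inner_sum, mul_pow, hnormsq x,
      Finset.mul_sum]
    apply Finset.sum_le_sum
    intro i _
    have h1 : ε ^ 2 ≤ (Real.sqrt (μ i) + ε) ^ 2 := by
      have := Real.sqrt_nonneg (μ i)
      nlinarith
    have h2 : 0 ≤ (b.repr x i) ^ 2 := sq_nonneg _
    calc ε ^ 2 * b.repr x i ^ 2 ≤ (Real.sqrt (μ i) + ε)^2 * b.repr x i ^ 2 := by nlinarith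
    _ = (starRingEnd ℝ) (b.repr x i * (Real.sqrt (μ i) + ε)) * (b.repr x i * (Real.sqrt (μ i) + ε)) := by
        simp [sq]; ring
  have h0 : 0 ≤ ε * ‖x‖ := by positivity
  calc ε * ‖x‖ = Real.sqrt ((ε * ‖x‖) ^ 2) := (Real.sqrt_sq h0).symm
  _ ≤ Real.sqrt (‖(A + ε • B) x‖ ^ 2) := Real.sqrt_le_sqrt hsq
  _ = ‖(A + ε • B) x‖ := Real.sqrt_sq (norm_nonneg _)

set_option maxHeartbeats 4000000 in
lemma exists_good_center {n m : ℕ} (Y : Submodule ℝ (EuclideanSpace ℝ (Fin n)))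
    (T : EuclideanSpace ℝ (Fin n) →L[ℝ] EuclideanSpace ℝ (Fin m))
    {ε : ℝ} (hε : 0 < ε) :
    ∃ T' : EuclideanSpace ℝ (Fin n) →L[ℝ] EuclideanSpace ℝ (Fin m), ‖T' - T‖ ≤ ε ∧
      ∀ S : EuclideanSpace ℝ (Fin n) →L[ℝ] EuclideanSpace ℝ (Fin m), ‖S - T'‖ < ε →
        Module.finrank ℝ (Y.map (S : EuclideanSpace ℝ (Fin n) →ₗ[ℝ] EuclideanSpace ℝ (Fin m)))
          = min m (Module.finrank ℝ Y) := by
  classical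
  haveI : CompleteSpace Y := FiniteDimensional.complete ℝ Y
  set P : EuclideanSpace ℝ (Fin n) →L[ℝ] Y := (Y.orthogonalProjectionOnto :) with hPdef
  set A : Y →L[ℝ] EuclideanSpace ℝ (Fin m) := T ∘L Y.subtypeL with hA
  have hP : ∀ (B₀ : Y →L[ℝ] EuclideanSpace ℝ (Fin m)), ‖B₀ ∘L P‖ ≤ ‖B₀‖ := by
    intro B₀
    calc ‖B₀ ∘L P‖ ≤ ‖B₀‖ * ‖P‖ := ContinuousLinearMap.opNorm_comp_le _ _
    _ ≤ ‖B₀‖ * 1 := by gcongr; exact Submodule.orthogonalProjectionOnto_norm_le (K := Y)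
    _ = ‖B₀‖ := mul_one _
  have hcompsub : ∀ (B₀ : Y →L[ℝ] EuclideanSpace ℝ (Fin m)),
      (B₀ ∘L P) ∘L Y.subtypeL = B₀ := by
    intro B₀
    ext y
    simp [hPdef, Submodule.orthogonalProjectionOnto_mem_subspace_eq_self]
  have hres : ∀ (W S : EuclideanSpace ℝ (Fin n) →L[ℝ] EuclideanSpace ℝ (Fin m)),
      ‖W ∘L Y.subtypeL - S ∘L Y.subtypeL‖ ≤ ‖W - S‖ := by
    intro W S
    have h : W ∘L Y.subtypeL - S ∘L Y.subtypeL = (W - S) ∘L Y.subtypeL := by ext y; simp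
    rw [h]
    calc ‖(W - S) ∘L Y.subtypeL‖ ≤ ‖W - S‖ * ‖Y.subtypeL‖ := ContinuousLinearMap.opNorm_comp_le _ _
    _ ≤ ‖W - S‖ * 1 := by gcongr; exact Submodule.norm_subtypeL_le Y
    _ = ‖W - S‖ := mul_one _
  rcases le_or_gt (Module.finrank ℝ Y) m with hle | hlt
  · -- injectivity case
    have hle' : Module.finrank ℝ Y ≤ Module.finrank ℝ (EuclideanSpace ℝ (Fin m)) := by
      rwa [finrank_euclideanSpace_fin]
    obtain ⟨B₀, hB₀norm, hB₀⟩ := exists_perturb hle' A hε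
    refine ⟨T + ε • (B₀ ∘L P), ?_, ?_⟩
    · have hB₀le : ‖B₀‖ ≤ 1 := by
        refine ContinuousLinearMap.opNorm_le_bound _ zero_le_one fun y => ?_
        rw [hB₀norm, one_mul]
      have h0 : T + ε • (B₀ ∘L P) - T = ε • (B₀ ∘L P) := by abel
      rw [h0]
      refine le_trans (ContinuousLinearMap.opNorm_smul_le _ _) ?_
      rw [Real.norm_of_nonneg hε.le]
      calc ε * ‖B₀ ∘L P‖ ≤ ε * 1 := by
            gcongr
            exact le_trans (hP B₀) hB₀le
      _ = ε := mul_one _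
    · intro S hS
      set T' := T + ε • (B₀ ∘L P) with hT'
      have hT'res : T' ∘L Y.subtypeL = A + ε • B₀ := by
        rw [hT', ContinuousLinearMap.add_comp, ContinuousLinearMap.smul_comp, hcompsub]
      have hinj : Function.Injective (S ∘L Y.subtypeL) := by
        rw [injective_iff_map_eq_zero]
        intro y hy
        by_contra hy0
        have h1 : ε * ‖y‖ ≤ ‖(A + ε • B₀) y‖ := hB₀ y
        have h2 : ‖(A + ε • B₀) y - (S ∘L Y.subtypeL) y‖ ≤ ‖S - T'‖ * ‖y‖ := by
          calc ‖(A + ε • B₀) y - (S ∘L Y.subtypeL) y‖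
              = ‖(T' ∘L Y.subtypeL - S ∘L Y.subtypeL) y‖ := by rw [hT'res]; rfl
          _ ≤ ‖T' ∘L Y.subtypeL - S ∘L Y.subtypeL‖ * ‖y‖ := ContinuousLinearMap.le_opNorm _ _
          _ ≤ ‖T' - S‖ * ‖y‖ := by gcongr ?_ * ‖y‖; exact hres T' S
          _ = ‖S - T'‖ * ‖y‖ := by rw [norm_sub_rev]
        rw [hy, sub_zero] at h2
        have hylt : 0 < ‖y‖ := by
          simpa using hy0
        have hc : ε * ‖y‖ ≤ ‖S - T'‖ * ‖y‖ := le_trans h1 h2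
        have : ε ≤ ‖S - T'‖ := le_of_mul_le_mul_right hc hylt
        linarith
      have hmap : Y.map (S : EuclideanSpace ℝ (Fin n) →ₗ[ℝ] EuclideanSpace ℝ (Fin m))
          = LinearMap.range ((S : EuclideanSpace ℝ (Fin n) →ₗ[ℝ] EuclideanSpace ℝ (Fin m)) ∘ₗ Y.subtype) := by
        rw [LinearMap.range_comp, Submodule.range_subtype]
      have hinj' : Function.Injective
          ((S : EuclideanSpace ℝ (Fin n) →ₗ[ℝ] EuclideanSpace ℝ (Fin m)) ∘ₗ Y.subtype) := hinj
      rw [hmap, LinearMap.finrank_range_of_inj hinj', min_eq_right hle]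
  · -- surjectivity case
    have hle' : Module.finrank ℝ (EuclideanSpace ℝ (Fin m)) ≤ Module.finrank ℝ Y := by
      rw [finrank_euclideanSpace_fin]; exact hlt.le
    obtain ⟨C, hCnorm, hC⟩ := exists_perturb hle' (ContinuousLinearMap.adjoint A) hε
    set B₀ : Y →L[ℝ] EuclideanSpace ℝ (Fin m) := ContinuousLinearMap.adjoint C with hB₀def
    set D : Y →L[ℝ] EuclideanSpace ℝ (Fin m) := A + ε • B₀ with hD
    have hDadj : ∀ (z : EuclideanSpace ℝ (Fin m)) (y : Y),
        ⟪((ContinuousLinearMap.adjoint A + ε • C) z : Y), y⟫ = ⟪z, D y⟫ := by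
      intro z y
      rw [hD]
      simp only [ContinuousLinearMap.add_apply, ContinuousLinearMap.smul_apply]
      rw [inner_add_left, inner_add_right]
      simp only [real_inner_smul_left, real_inner_smul_right, inner_smul_left, inner_smul_right,
        conj_trivial]
      rw [ContinuousLinearMap.adjoint_inner_left, hB₀def, ContinuousLinearMap.adjoint_inner_right]
      congr 1
      exact real_inner_smul_left (C z) y ε
    have hB₀le : ‖B₀‖ ≤ 1 := by
      rw [hB₀def]
      refine ContinuousLinearMap.opNorm_le_bound _ zero_le_one fun z => ?_
      rw [one_mul]
      have h := (ContinuousLinearMap.adjoint : (EuclideanSpace ℝ (Fin m) →L[ℝ] Y) ≃ₗᵢ⋆[ℝ] _).norm_map C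
      calc ‖ContinuousLinearMap.adjoint C z‖ ≤ ‖ContinuousLinearMap.adjoint C‖ * ‖z‖ :=
        ContinuousLinearMap.le_opNorm _ _
      _ ≤ 1 * ‖z‖ := by
          gcongr
          rw [h]
          refine ContinuousLinearMap.opNorm_le_bound _ zero_le_one fun w => ?_
          rw [hCnorm, one_mul]
      _ = ‖z‖ := one_mul _
    refine ⟨T + ε • (B₀ ∘L P), ?_, ?_⟩
    · have h0 : T + ε • (B₀ ∘L P) - T = ε • (B₀ ∘L P) := by abel
      rw [h0]
      refine le_trans (ContinuousLinearMap.opNorm_smul_le _ _) ?_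
      rw [Real.norm_of_nonneg hε.le]
      calc ε * ‖B₀ ∘L P‖ ≤ ε * 1 := by
            gcongr
            exact le_trans (hP B₀) hB₀le
      _ = ε := mul_one _
    · intro S hS
      set T' := T + ε • (B₀ ∘L P) with hT'
      have hT'res : T' ∘L Y.subtypeL = D := by
        rw [hT', ContinuousLinearMap.add_comp, ContinuousLinearMap.smul_comp, hcompsub, hD]
      -- surjectivity of S on Y via orthogonal complement
      have hzero : ∀ z : EuclideanSpace ℝ (Fin m),
          (∀ y : Y, ⟪(S ∘L Y.subtypeL) y, z⟫ = 0) → z = 0 := by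
        intro z hz
        by_contra hz0
        have hzlt : 0 < ‖z‖ := by simpa using hz0
        set w : Y := (ContinuousLinearMap.adjoint A + ε • C) z with hw
        have h1 : ε * ‖z‖ ≤ ‖w‖ := hC z
        have hwpos : 0 < ‖w‖ := lt_of_lt_of_le (by positivity) h1
        have hz' : ⟪z, (S ∘L Y.subtypeL) w⟫ = 0 := by
          rw [real_inner_comm]; exact hz w
        have h2 : ‖w‖ ^ 2 = ⟪z, D w - (S ∘L Y.subtypeL) w⟫ := by
          rw [inner_sub_right, hz', sub_zero, ← hDadj z w, ← hw, real_inner_self_eq_norm_sq]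
        have h3 : ⟪z, D w - (S ∘L Y.subtypeL) w⟫ ≤ ‖z‖ * (‖S - T'‖ * ‖w‖) := by
          have hdw : D w - (S ∘L Y.subtypeL) w = (T' ∘L Y.subtypeL - S ∘L Y.subtypeL) w := by
            rw [hT'res]; rfl
          calc ⟪z, D w - (S ∘L Y.subtypeL) w⟫ ≤ ‖z‖ * ‖D w - (S ∘L Y.subtypeL) w‖ :=
            real_inner_le_norm _ _
          _ ≤ ‖z‖ * (‖S - T'‖ * ‖w‖) := by
              gcongr ‖z‖ * ?_
              rw [hdw]
              calc ‖(T' ∘L Y.subtypeL - S ∘L Y.subtypeL) w‖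
                  ≤ ‖T' ∘L Y.subtypeL - S ∘L Y.subtypeL‖ * ‖w‖ := ContinuousLinearMap.le_opNorm _ _
              _ ≤ ‖T' - S‖ * ‖w‖ := by gcongr ?_ * ‖w‖; exact hres T' S
              _ = ‖S - T'‖ * ‖w‖ := by rw [norm_sub_rev]
        nlinarith [h1, h2, h3, hwpos, hzlt, hS,
          mul_lt_mul_of_pos_right (mul_lt_mul_of_pos_left hS hzlt) hwpos,
          mul_le_mul_of_nonneg_right h1 (norm_nonneg (w : Y))]
      -- conclude K = ⊤
      have hK : Y.map (S : EuclideanSpace ℝ (Fin n) →ₗ[ℝ] EuclideanSpace ℝ (Fin m)) = ⊤ := by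
        rw [← Submodule.orthogonal_eq_bot_iff]
        rw [Submodule.eq_bot_iff]
        intro z hzmem
        refine hzero z fun y => ?_
        exact (Submodule.mem_orthogonal _ z).mp hzmem _ (Submodule.mem_map_of_mem y.2)
      rw [hK]
      rw [finrank_top, finrank_euclideanSpace_fin, min_eq_left hlt.le]

set_option maxHeartbeats 4000000 in
/-- The set of continuous linear maps T : ℝⁿ → ℝᵐ whose restriction to a fixed subspace Y does
not have maximal rank is porous in L(ℝⁿ, ℝᵐ) (operator norm). -/
theorem nonMaximalRank_restriction_porous {n m : ℕ} (Y : Submodule ℝ (EuclideanSpace ℝ (Fin n))) :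
    IsPorous {T : EuclideanSpace ℝ (Fin n) →L[ℝ] EuclideanSpace ℝ (Fin m) |
      Module.finrank ℝ (Y.map (T : EuclideanSpace ℝ (Fin n) →ₗ[ℝ] EuclideanSpace ℝ (Fin m))) <
        min m (Module.finrank ℝ Y)} := by
  intro T hT
  set X := {T : EuclideanSpace ℝ (Fin n) →L[ℝ] EuclideanSpace ℝ (Fin m) |
      Module.finrank ℝ (Y.map (T : EuclideanSpace ℝ (Fin n) →ₗ[ℝ] EuclideanSpace ℝ (Fin m))) <
        min m (Module.finrank ℝ Y)} with hX
  -- nontriviality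
  have hmin : 0 < min m (Module.finrank ℝ Y) := lt_of_le_of_lt (Nat.zero_le _) hT
  have hm : 0 < m := lt_of_lt_of_le hmin (min_le_left _ _)
  have hd : 0 < Module.finrank ℝ Y := lt_of_lt_of_le hmin (min_le_right _ _)
  haveI : Nontrivial Y := Module.nontrivial_of_finrank_pos hd
  obtain ⟨y₀, hy₀⟩ := exists_ne (0 : Y)
  have he₀ : (EuclideanSpace.single (⟨0, hm⟩ : Fin m) (1:ℝ)) ≠ 0 := by
    intro h
    have := congrArg (fun v => v (⟨0, hm⟩ : Fin m)) h
    simp [EuclideanSpace.single_apply] at this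
  set u₀ : EuclideanSpace ℝ (Fin n) →L[ℝ] EuclideanSpace ℝ (Fin m) :=
    (innerSL ℝ (y₀ : EuclideanSpace ℝ (Fin n))).smulRight
      (EuclideanSpace.single (⟨0, hm⟩ : Fin m) (1:ℝ)) with hu₀
  have hu₀ne : u₀ ≠ 0 := by
    intro h
    have h2 := congrFun (congrArg DFunLike.coe h) (y₀ : EuclideanSpace ℝ (Fin n))
    simp only [hu₀, ContinuousLinearMap.smulRight_apply, innerSL_apply_apply,
      ContinuousLinearMap.zero_apply] at h2
    have hyne : (y₀ : EuclideanSpace ℝ (Fin n)) ≠ 0 := by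
      simpa [Submodule.coe_eq_zero] using hy₀
    have hpos : (0:ℝ) < ⟪(y₀ : EuclideanSpace ℝ (Fin n)), (y₀ : EuclideanSpace ℝ (Fin n))⟫ := by
      rw [real_inner_self_eq_norm_sq]
      exact pow_pos (norm_pos_iff.mpr hyne) 2
    rw [smul_eq_zero] at h2
    rcases h2 with h2 | h2
    · exact hpos.ne' h2
    · exact he₀ h2
  haveI : Nontrivial (EuclideanSpace ℝ (Fin n) →L[ℝ] EuclideanSpace ℝ (Fin m)) :=
    nontrivial_of_ne u₀ 0 hu₀ne
  have hns : ∀ (c : ℝ) (W : EuclideanSpace ℝ (Fin n) →L[ℝ] EuclideanSpace ℝ (Fin m)),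
      ‖c • W‖ = ‖c‖ * ‖W‖ := fun c W => norm_smul c W
  obtain ⟨u, hu⟩ : ∃ u : EuclideanSpace ℝ (Fin n) →L[ℝ] EuclideanSpace ℝ (Fin m), ‖u‖ = 1 := by
    refine ⟨‖u₀‖⁻¹ • u₀, ?_⟩
    rw [hns, norm_inv, norm_norm, inv_mul_cancel₀ (norm_ne_zero_iff.mpr hu₀ne)]
  -- per-R bounds
  have hbound : ∀ R : ℝ, 0 < R → porGamma T R X ≤ 3 * R := by
    intro R hR
    refine Real.sSup_le ?_ (by positivity)
    rintro r ⟨hr0, x', hsub⟩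
    rcases le_or_gt r 0 with h | h
    · linarith
    · have hx' : x' ∈ ball T R := (hsub (mem_ball_self h)).1
      have hpt : x' + (3*r/4) • u ∈ ball T R := by
        refine (hsub ?_).1
        rw [mem_ball, dist_eq_norm]
        have : x' + (3*r/4) • u - x' = (3*r/4) • u := by abel
        rw [this, hns, hu, mul_one, Real.norm_of_nonneg (by linarith)]
        linarith
      have h1 : dist (x' + (3*r/4) • u) x' = 3*r/4 := by
        rw [dist_eq_norm]
        have : x' + (3*r/4) • u - x' = (3*r/4) • u := by abel
        rw [this, hns, hu, mul_one, Real.norm_of_nonneg (by linarith)]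
      have h2 := dist_triangle (x' + (3*r/4) • u) T x'
      rw [mem_ball] at hx' hpt
      rw [dist_comm T x'] at h2
      rw [h1] at h2
      linarith
  have hmem : ∀ R : ℝ, 0 < R → R / 2 ≤ porGamma T R X := by
    intro R hR
    obtain ⟨T', hT'close, hT'good⟩ := exists_good_center Y T (show (0:ℝ) < R/2 by linarith)
    refine le_csSup ⟨3*R, ?_⟩ ⟨by linarith, T', ?_⟩
    · rintro r ⟨hr0, x', hsub⟩
      rcases le_or_gt r 0 with h | h
      · linarith
      · have hx' : x' ∈ ball T R := (hsub (mem_ball_self h)).1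
        have hpt : x' + (3*r/4) • u ∈ ball T R := by
          refine (hsub ?_).1
          rw [mem_ball, dist_eq_norm]
          have : x' + (3*r/4) • u - x' = (3*r/4) • u := by abel
          rw [this, hns, hu, mul_one, Real.norm_of_nonneg (by linarith)]
          linarith
        have h1 : dist (x' + (3*r/4) • u) x' = 3*r/4 := by
          rw [dist_eq_norm]
          have : x' + (3*r/4) • u - x' = (3*r/4) • u := by abel
          rw [this, hns, hu, mul_one, Real.norm_of_nonneg (by linarith)]
        have h2 := dist_triangle (x' + (3*r/4) • u) T x'
        rw [mem_ball] at hx' hpt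
        rw [dist_comm T x'] at h2
        rw [h1] at h2
        linarith
    · intro S hS
      rw [mem_ball, dist_eq_norm] at hS
      constructor
      · rw [mem_ball, dist_eq_norm]
        calc ‖S - T‖ = ‖(S - T') + (T' - T)‖ := by abel_nf
        _ ≤ ‖S - T'‖ + ‖T' - T‖ := norm_add_le _ _
        _ < R/2 + R/2 := by
            apply add_lt_add_of_lt_of_le hS hT'close
        _ = R := by ring
      · intro hSX
        rw [hX, mem_setOf_eq] at hSX
        rw [hT'good S hS] at hSX
        exact lt_irrefl _ hSX
  -- conclude
  have hNeBot : (nhdsWithin (0:ℝ) (Ioi 0)).NeBot := nhdsGT_neBot 0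
  have hev : ∀ᶠ R in nhdsWithin (0:ℝ) (Ioi 0), (1:ℝ)/2 ≤ porGamma T R X / R := by
    filter_upwards [self_mem_nhdsWithin] with R hR
    have hRpos : (0:ℝ) < R := hR
    rw [le_div_iff₀ hRpos]
    calc (1:ℝ)/2 * R = R/2 := by ring
    _ ≤ porGamma T R X := hmem R hRpos
  have hbdd : ∀ᶠ R in nhdsWithin (0:ℝ) (Ioi 0), porGamma T R X / R ≤ 3 := by
    filter_upwards [self_mem_nhdsWithin] with R hR
    have hRpos : (0:ℝ) < R := hR
    rw [div_le_iff₀ hRpos]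
    exact le_trans (hbound R hRpos) (by linarith)
  have hcb : IsCoboundedUnder (· ≥ ·) (nhdsWithin (0:ℝ) (Ioi 0))
      (fun R => porGamma T R X / R) :=
    Filter.isCoboundedUnder_ge_of_eventually_le _ hbdd
  have hlim : (1:ℝ)/2 ≤ porosityAt T X := le_liminf_of_le hcb hev
  have : (0:ℝ) < 1/2 := by norm_num
  exact lt_of_lt_of_le this hlim
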